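/- Let E ⊆ ℝ be a G_δ set of Lebesgue measure zero. Then there exists a continuous, monotone (nondecreasing) function f : ℝ → ℝ such that L_f^∞ = E, l_f^∞ = ∅, and moreover lip f(x) = 0 for every x ∈ E. -/

import Mathlib

open Set Filter MeasureTheory Topology
open scoped ENNReal NNReal

/-- `M_f(x,r) = sup { |f(x)-f(y)|/r : |x-y| ≤ r }`, valued in `[0,∞]`. -/
noncomputable def Mf (f : ℝ → ℝ) (x r : ℝ) : ℝ≥0∞ :=
  ⨆ y ∈ {y : ℝ | |x - y| ≤ r}, ENNReal.ofReal (|f x - f y| / r)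

/-- The big Lip function: `Lip f(x) = limsup_{r→0⁺} M_f(x,r)`. -/
noncomputable def bigLip (f : ℝ → ℝ) (x : ℝ) : ℝ≥0∞ :=
  Filter.limsup (fun r => Mf f x r) (𝓝[>] (0 : ℝ))

/-- The little lip function: `lip f(x) = liminf_{r→0⁺} M_f(x,r)`. -/
noncomputable def litLip (f : ℝ → ℝ) (x : ℝ) : ℝ≥0∞ :=
  Filter.liminf (fun r => Mf f x r) (𝓝[>] (0 : ℝ))

/-- A set `E ⊆ ℝ` is trim if `λ(E ∩ (a,b)) < b - a` for every open interval `(a,b)`. -/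
def Trim (E : Set ℝ) : Prop :=
  ∀ a b : ℝ, a < b → volume (E ∩ Ioo a b) < ENNReal.ofReal (b - a)


open Metric

namespace LipAux


lemma ofReal_half_pow (i : ℕ) : ENNReal.ofReal ((2⁻¹:ℝ)^i) = (2⁻¹:ℝ≥0∞)^i := by
  rw [ENNReal.ofReal_pow (by norm_num)]
  congr 1
  rw [ENNReal.ofReal_inv_of_pos (by norm_num)]
  norm_num

lemma tsum_half_geo : (∑' i : ℕ, (2⁻¹:ℝ≥0∞)^i) = 2 := by
  rw [ENNReal.tsum_geometric, ENNReal.one_sub_inv_two]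
  simp

lemma keyB (m : ℕ) : (2:ℝ)^m * ((16:ℝ)⁻¹)^(2*m+2) ≤ ((2:ℝ)⁻¹)^m * ((2:ℝ)⁻¹)^m := by
  have h1 : ((16:ℝ)⁻¹)^(2*m+2) ≤ ((16:ℝ)⁻¹)^(2*m) :=
    pow_le_pow_of_le_one (by norm_num) (by norm_num) (by omega)
  have h2 : (2:ℝ)^m * ((16:ℝ)⁻¹)^(2*m) ≤ ((2:ℝ)⁻¹)^m * ((2:ℝ)⁻¹)^m := by
    have : ((16:ℝ)⁻¹)^(2*m) = ((16:ℝ)⁻¹^2)^m := by rw [← pow_mul, mul_comm]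
    rw [this, ← mul_pow, ← mul_pow]
    apply pow_le_pow_left₀ (by norm_num)
    norm_num
  nlinarith [pow_nonneg (by norm_num : (0:ℝ) ≤ 2) m, pow_nonneg (by norm_num : (0:ℝ) ≤ 16⁻¹) (2*m+2), pow_nonneg (by norm_num : (0:ℝ) ≤ 16⁻¹) (2*m)]

lemma dyadic {c : ℝ} (h0 : 0 < c) (h1 : c ≤ 1) :
    ∃ i : ℕ, (2⁻¹:ℝ)^i/4 < c ∧ c < 2*(2⁻¹)^i := by
  by_cases hc : 1/2 < c
  · exact ⟨0, by norm_num; linarith, by norm_num; linarith⟩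
  push_neg at hc
  have hex : ∃ i : ℕ, (2⁻¹:ℝ)^i < 2*c := exists_pow_lt_of_lt_one (by linarith) (by norm_num)
  classical
  set i₀ := Nat.find hex with hi₀
  have hspec : (2⁻¹:ℝ)^i₀ < 2*c := Nat.find_spec hex
  have hi0pos : i₀ ≠ 0 := by
    intro h
    rw [h] at hspec
    simp at hspec
    linarith
  obtain ⟨m, hm⟩ := Nat.exists_eq_succ_of_ne_zero hi0pos
  have hmin : ¬ ((2⁻¹:ℝ)^m < 2*c) := Nat.find_min hex (by omega)
  push_neg at hmin
  have hcle : c ≤ (2⁻¹:ℝ)^i₀ := by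
    have : (2⁻¹:ℝ)^i₀ = (2⁻¹:ℝ)^m * 2⁻¹ := by rw [hm, pow_succ]
    rw [this]
    linarith
  refine ⟨i₀, by linarith, by linarith⟩

/-- One step of the construction: a locally thin open cover. -/
lemma strip_step {E : Set ℝ} (hE : volume E = 0) (U Gn : Set ℝ)
    (hUo : IsOpen U) (hEU : E ⊆ U) (hUc : Uᶜ.Nonempty) (hU1 : volume U ≤ 1)
    (hGo : IsOpen Gn) (hEG : E ⊆ Gn) (ε : ℝ) (hε : 0 < ε) :
    ∃ V : Set ℝ, IsOpen V ∧ E ⊆ V ∧ V ⊆ U ∧ V ⊆ Gn ∧ volume V ≤ ENNReal.ofReal ε ∧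
      ∀ s : ℝ, 0 < s →
        volume (V ∩ {y | infDist y Uᶜ ≤ s}) ≤ ENNReal.ofReal (ε * s) := by
  set d : ℝ → ℝ := fun y => infDist y Uᶜ with hd
  have hdcont : Continuous d := continuous_infDist_pt _
  have hball : ∀ y : ℝ, ∀ z : ℝ, dist z y < d y → z ∈ U := by
    intro y z hz
    by_contra hzU
    exact absurd (infDist_le_dist_of_mem (s := Uᶜ) hzU) (by rw [dist_comm] at hz; simp only [hd] at hz ⊢; linarith)
  have hdle : ∀ y : ℝ, d y ≤ 1 := by
    intro y
    by_contra hgt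
    push_neg at hgt
    have hsub : Ioo (y-1) (y+1) ⊆ U := by
      intro z hz
      apply hball y z
      rw [Real.dist_eq, abs_lt]
      constructor <;> [linarith [hz.1]; linarith [hz.2]]
    have := measure_mono hsub (μ := volume)
    rw [Real.volume_Ioo] at this
    have h2 : ENNReal.ofReal (y+1-(y-1)) ≤ 1 := le_trans this hU1
    rw [show y+1-(y-1) = 2 by ring] at h2
    norm_num at h2
  -- annuli
  set A : ℕ → Set ℝ := fun i => {y | (2⁻¹:ℝ)^i/4 < d y} ∩ {y | d y < 2*(2⁻¹)^i} with hA
  have hAopen : ∀ i, IsOpen (A i) :=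
    fun i => (isOpen_lt continuous_const hdcont).inter (isOpen_lt hdcont continuous_const)
  -- covers
  have hcov : ∀ i : ℕ, ∃ O : Set ℝ, E ∩ A i ⊆ O ∧ IsOpen O ∧
      volume O ≤ ENNReal.ofReal (ε/8) * ((2⁻¹:ℝ≥0∞)^i * (2⁻¹:ℝ≥0∞)^i) := by
    intro i
    have hnull : volume (E ∩ A i) = 0 := measure_mono_null inter_subset_left hE
    have hpos : (0:ℝ≥0∞) < ENNReal.ofReal (ε/8) * ((2⁻¹:ℝ≥0∞)^i * (2⁻¹:ℝ≥0∞)^i) := by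
      apply ENNReal.mul_pos
      · simp [ENNReal.ofReal_pos]; linarith
      · exact mul_ne_zero (pow_ne_zero _ (ENNReal.inv_ne_zero.2 (by norm_num)))
          (pow_ne_zero _ (ENNReal.inv_ne_zero.2 (by norm_num)))
    obtain ⟨O, hO1, hO2, hO3⟩ := Set.exists_isOpen_lt_of_lt (E ∩ A i) _ (hnull ▸ hpos)
    exact ⟨O, hO1, hO2, hO3.le⟩
  choose O hO1 hO2 hO3 using hcov
  refine ⟨⋃ i, (O i ∩ A i ∩ U ∩ Gn), ?_, ?_, ?_, ?_, ?_, ?_⟩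
  · exact isOpen_iUnion fun i => (((hO2 i).inter (hAopen i)).inter hUo).inter hGo
  · intro y hy
    have hyU : y ∈ U := hEU hy
    have hdpos : 0 < d y := by
      have := (hUo.isClosed_compl.notMem_iff_infDist_pos hUc).1 (by simpa using hyU)
      simpa [hd] using this
    obtain ⟨i, hi1, hi2⟩ := dyadic hdpos (hdle y)
    exact mem_iUnion.2 ⟨i, ⟨⟨hO1 i ⟨hy, ⟨hi1, hi2⟩⟩, ⟨hi1, hi2⟩⟩, hyU⟩, hEG hy⟩
  · exact iUnion_subset fun i => fun y hy => hy.1.2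
  · exact iUnion_subset fun i => fun y hy => hy.2
  · calc volume (⋃ i, (O i ∩ A i ∩ U ∩ Gn)) ≤ ∑' i, volume (O i ∩ A i ∩ U ∩ Gn) :=
          measure_iUnion_le _
      _ ≤ ∑' i, ENNReal.ofReal (ε/8) * ((2⁻¹:ℝ≥0∞)^i * (2⁻¹:ℝ≥0∞)^i) := by
          apply ENNReal.tsum_le_tsum
          intro i
          exact le_trans (measure_mono (by intro z hz; exact hz.1.1.1)) (hO3 i)
      _ ≤ ∑' i, ENNReal.ofReal (ε/8) * (2⁻¹:ℝ≥0∞)^i := by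
          apply ENNReal.tsum_le_tsum
          intro i
          gcongr
          calc (2⁻¹:ℝ≥0∞)^i * (2⁻¹:ℝ≥0∞)^i ≤ 1 * (2⁻¹:ℝ≥0∞)^i := by
                gcongr
                exact pow_le_one' (by norm_num) i
            _ = (2⁻¹:ℝ≥0∞)^i := one_mul _
      _ = ENNReal.ofReal (ε/8) * 2 := by rw [ENNReal.tsum_mul_left, tsum_half_geo]
      _ ≤ ENNReal.ofReal ε := by
          rw [← ENNReal.ofReal_ofNat 2, ← ENNReal.ofReal_mul (by linarith)]
          exact ENNReal.ofReal_le_ofReal (by linarith)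
  · intro s hs
    have hsub : (⋃ i, (O i ∩ A i ∩ U ∩ Gn)) ∩ {y | infDist y Uᶜ ≤ s}
        ⊆ ⋃ i, ((O i ∩ A i ∩ U ∩ Gn) ∩ {y | d y ≤ s}) := by
      rw [iUnion_inter]
    calc volume ((⋃ i, (O i ∩ A i ∩ U ∩ Gn)) ∩ {y | infDist y Uᶜ ≤ s})
        ≤ ∑' i, volume ((O i ∩ A i ∩ U ∩ Gn) ∩ {y | d y ≤ s}) :=
          le_trans (measure_mono hsub) (measure_iUnion_le _)
      _ ≤ ∑' i, ENNReal.ofReal (ε/8 * (4*s)) * (2⁻¹:ℝ≥0∞)^i := by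
          apply ENNReal.tsum_le_tsum
          intro i
          by_cases hcase : (2⁻¹:ℝ)^i < 4*s
          · calc volume ((O i ∩ A i ∩ U ∩ Gn) ∩ {y | d y ≤ s})
                ≤ ENNReal.ofReal (ε/8) * ((2⁻¹:ℝ≥0∞)^i * (2⁻¹:ℝ≥0∞)^i) :=
                  le_trans (measure_mono (by intro z hz; exact hz.1.1.1.1)) (hO3 i)
              _ ≤ ENNReal.ofReal (ε/8) * (ENNReal.ofReal (4*s) * (2⁻¹:ℝ≥0∞)^i) := by
                  gcongr
                  rw [← ofReal_half_pow]
                  exact ENNReal.ofReal_le_ofReal hcase.le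
              _ = ENNReal.ofReal (ε/8 * (4*s)) * (2⁻¹:ℝ≥0∞)^i := by
                  rw [ENNReal.ofReal_mul (show (0:ℝ) ≤ ε/8 by linarith)]; ring
          · push_neg at hcase
            have : (O i ∩ A i ∩ U ∩ Gn) ∩ {y | d y ≤ s} = ∅ := by
              ext z
              simp only [mem_inter_iff, mem_empty_iff_false, iff_false, not_and, mem_setOf_eq]
              intro hz hzs
              have h1 : (2⁻¹:ℝ)^i/4 < d z := hz.1.1.2.1
              linarith
            rw [this]
            simp
      _ = ENNReal.ofReal (ε/8 * (4*s)) * 2 := by rw [ENNReal.tsum_mul_left, tsum_half_geo]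
      _ ≤ ENNReal.ofReal (ε * s) := by
          rw [← ENNReal.ofReal_ofNat 2, ← ENNReal.ofReal_mul (by positivity)]
          apply ENNReal.ofReal_le_ofReal
          nlinarith


variable (μ : Measure ℝ) [IsFiniteMeasure μ]

noncomputable def FF : ℝ → ℝ := fun x => (μ (Iic x)).toReal

lemma FF_mono : Monotone (FF μ) := fun a b hab =>
  ENNReal.toReal_mono (measure_ne_top μ _) (measure_mono (Iic_subset_Iic.2 hab))

lemma FF_diff {a b : ℝ} (hba : b ≤ a) : FF μ a - FF μ b = (μ (Ioc b a)).toReal := by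
  have h2 : μ (Iic a) = μ (Iic b) + μ (Ioc b a) := by
    rw [← Iic_union_Ioc_eq_Iic hba, measure_union (Iic_disjoint_Ioc le_rfl) measurableSet_Ioc]
  simp only [FF]
  rw [h2, ENNReal.toReal_add (measure_ne_top μ _) (measure_ne_top μ _)]
  ring

lemma FF_abs {x y r : ℝ} (hxy : |x - y| ≤ r) :
    |FF μ x - FF μ y| ≤ (μ (Ioc (x-r) (x+r))).toReal := by
  have h := abs_le.1 hxy
  rcases le_total y x with hc | hc
  · rw [abs_of_nonneg (sub_nonneg.2 (FF_mono μ hc)), FF_diff μ hc]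
    exact ENNReal.toReal_mono (measure_ne_top μ _)
      (measure_mono (Ioc_subset_Ioc (by linarith) (by linarith)))
  · rw [abs_sub_comm, abs_of_nonneg (sub_nonneg.2 (FF_mono μ hc)), FF_diff μ hc]
    exact ENNReal.toReal_mono (measure_ne_top μ _)
      (measure_mono (Ioc_subset_Ioc (by linarith) (by linarith)))

lemma FF_cont (h : ∀ x : ℝ, μ {x} = 0) : Continuous (FF μ) := by
  rw [continuous_iff_continuousAt]
  intro a
  rw [Metric.continuousAt_iff]
  intro ε hε
  set s : ℕ → Set ℝ := fun n => Ioc (a - 1/(n+1)) (a + 1/(n+1)) with hs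
  have hmeas : ∀ n, NullMeasurableSet (s n) μ := fun n => measurableSet_Ioc.nullMeasurableSet
  have hanti : Antitone s := by
    intro m n hmn
    have h1 : 1/((n:ℝ)+1) ≤ 1/((m:ℝ)+1) := by
      apply one_div_le_one_div_of_le (by positivity)
      have := (Nat.cast_le (α := ℝ)).2 hmn; linarith
    exact Ioc_subset_Ioc (by linarith) (by linarith)
  have hint : ⋂ n, s n = {a} := by
    ext z
    simp only [hs, mem_iInter, mem_Ioc, mem_singleton_iff]
    constructor
    · intro hz
      have h1 : z ≤ a := by
        by_contra hlt
        push_neg at hlt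
        obtain ⟨n, hn⟩ := exists_nat_one_div_lt (show (0:ℝ) < z - a by linarith)
        have := (hz n).2
        linarith
      have h2 : a ≤ z := by
        by_contra hlt
        push_neg at hlt
        obtain ⟨n, hn⟩ := exists_nat_one_div_lt (show (0:ℝ) < a - z by linarith)
        have := (hz n).1
        linarith
      linarith
    · rintro rfl n
      have : (0:ℝ) < 1/((n:ℝ)+1) := by positivity
      exact ⟨by linarith, by linarith⟩
  have htend := MeasureTheory.tendsto_measure_iInter_atTop hmeas hanti ⟨0, measure_ne_top μ _⟩
  rw [hint, h a] at htend
  have hev := htend.eventually_lt_const (show (0:ℝ≥0∞) < ENNReal.ofReal ε from ENNReal.ofReal_pos.2 hε)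
  obtain ⟨n, hn⟩ := hev.exists
  refine ⟨1/((n:ℝ)+1), by positivity, ?_⟩
  intro y hy
  have hyd : |a - y| ≤ 1/((n:ℝ)+1) := by
    rw [Real.dist_eq] at hy
    rw [abs_sub_comm]
    exact hy.le
  have h2 := FF_abs μ (x := a) (y := y) hyd
  have h3 : (μ (Ioc (a - 1/((n:ℝ)+1)) (a + 1/((n:ℝ)+1)))).toReal < ε :=
    ENNReal.toReal_lt_of_lt_ofReal hn
  rw [Real.dist_eq, abs_sub_comm]
  calc |FF μ a - FF μ y| ≤ _ := h2
    _ < ε := h3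

lemma Mf_FF_le {x r : ℝ} (hr : 0 < r) :
    Mf (FF μ) x r ≤ ENNReal.ofReal ((μ (Ioc (x-r) (x+r))).toReal / r) := by
  apply iSup₂_le
  intro y hy
  apply ENNReal.ofReal_le_ofReal
  have := FF_abs μ (x := x) (y := y) hy
  gcongr

lemma le_Mf_FF_right {x r : ℝ} (hr : 0 < r) :
    ENNReal.ofReal ((μ (Ioc x (x+r))).toReal / r) ≤ Mf (FF μ) x r := by
  have hmem : (x + r) ∈ {y : ℝ | |x - y| ≤ r} := by
    simp only [mem_setOf_eq]
    rw [show x - (x+r) = -r by ring, abs_neg, abs_of_nonneg hr.le]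
  have hval : |FF μ x - FF μ (x+r)| = (μ (Ioc x (x+r))).toReal := by
    rw [abs_sub_comm, abs_of_nonneg (sub_nonneg.2 (FF_mono μ (by linarith)))]
    exact FF_diff μ (by linarith)
  calc ENNReal.ofReal ((μ (Ioc x (x+r))).toReal / r)
      = ENNReal.ofReal (|FF μ x - FF μ (x+r)| / r) := by rw [hval]
    _ ≤ Mf (FF μ) x r :=
        le_iSup₂ (f := fun (y : ℝ) (_ : y ∈ {y : ℝ | |x - y| ≤ r}) =>
          ENNReal.ofReal (|FF μ x - FF μ y| / r)) (x+r) hmem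

lemma le_Mf_FF_left {x r : ℝ} (hr : 0 < r) :
    ENNReal.ofReal ((μ (Ioc (x-r) x)).toReal / r) ≤ Mf (FF μ) x r := by
  have hmem : (x - r) ∈ {y : ℝ | |x - y| ≤ r} := by
    simp only [mem_setOf_eq]
    rw [show x - (x-r) = r by ring, abs_of_nonneg hr.le]
  have hval : |FF μ x - FF μ (x-r)| = (μ (Ioc (x-r) x)).toReal := by
    rw [abs_of_nonneg (sub_nonneg.2 (FF_mono μ (by linarith)))]
    exact FF_diff μ (by linarith)
  calc ENNReal.ofReal ((μ (Ioc (x-r) x)).toReal / r)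
      = ENNReal.ofReal (|FF μ x - FF μ (x-r)| / r) := by rw [hval]
    _ ≤ Mf (FF μ) x r :=
        le_iSup₂ (f := fun (y : ℝ) (_ : y ∈ {y : ℝ | |x - y| ≤ r}) =>
          ENNReal.ofReal (|FF μ x - FF μ y| / r)) (x-r) hmem

end LipAux

-- If `E ⊆ ℝ` is a `G_δ` set of measure zero, then there is a continuous monotone
-- (nondecreasing) `f : ℝ → ℝ` with `L_f^∞ = E`, `l_f^∞ = ∅`, and `lip f = 0` on `E`.
set_option maxHeartbeats 2000000 in
theorem exists_monotone_of_measure_zero_Gdelta (E : Set ℝ) (hGδ : IsGδ E)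
    (hE : volume E = 0) :
    ∃ f : ℝ → ℝ, Continuous f ∧ Monotone f ∧ {x : ℝ | bigLip f x = ⊤} = E ∧
      (∀ x : ℝ, litLip f x ≠ ⊤) ∧ (∀ x ∈ E, litLip f x = 0) := by
  classical
  obtain ⟨G, hGo, hGE⟩ := isGδ_iff_eq_iInter_nat.1 hGδ
  have hEG : ∀ n, E ⊆ G n := fun n => hGE ▸ iInter_subset G n
  -- base open set
  obtain ⟨U₀, hU₀sub, hU₀o, hU₀v⟩ :=
    Set.exists_isOpen_lt_of_lt E 1 (by rw [hE]; norm_num)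
  have hU₀c : U₀ᶜ.Nonempty := by
    by_contra hno
    rw [Set.not_nonempty_iff_eq_empty, compl_empty_iff] at hno
    rw [hno, Real.volume_univ] at hU₀v
    exact absurd hU₀v (by simp)
  -- recursive construction
  have hstep : ∀ (k : ℕ) (V : Set ℝ), IsOpen V → E ⊆ V → Vᶜ.Nonempty → volume V ≤ 1 →
      ∃ V' : Set ℝ, IsOpen V' ∧ E ⊆ V' ∧ V' ⊆ V ∧ V' ⊆ G k ∧
        volume V' ≤ ENNReal.ofReal ((16:ℝ)⁻¹^(k+1)) ∧
        ∀ s : ℝ, 0 < s →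
          volume (V' ∩ {y | infDist y Vᶜ ≤ s}) ≤ ENNReal.ofReal ((16:ℝ)⁻¹^(k+1) * s) :=
    fun k V h1 h2 h3 h4 =>
      LipAux.strip_step hE V (G k) h1 h2 h3 h4 (hGo k) (hEG k) _ (by positivity)
  choose! F hF1 hF2 hF3 hF4 hF5 hF6 using hstep
  let W : ℕ → Set ℝ := fun k => Nat.rec U₀ (fun k' W' => F k' W') k
  have hWsucc : ∀ k, W (k+1) = F k (W k) := fun k => rfl
  have hWinv : ∀ k, IsOpen (W k) ∧ E ⊆ W k ∧ (W k)ᶜ.Nonempty ∧ volume (W k) ≤ 1 := by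
    intro k
    induction k with
    | zero => exact ⟨hU₀o, hU₀sub, hU₀c, hU₀v.le⟩
    | succ k ih =>
      rw [hWsucc k]
      obtain ⟨h1, h2, h3, h4⟩ := ih
      refine ⟨hF1 k (W k) h1 h2 h3 h4, hF2 k (W k) h1 h2 h3 h4, ?_, ?_⟩
      · exact Set.Nonempty.mono (compl_subset_compl.2 (hF3 k (W k) h1 h2 h3 h4)) h3
      · refine (hF5 k (W k) h1 h2 h3 h4).trans ?_
        exact ENNReal.ofReal_le_one.2 (pow_le_one₀ (by norm_num) (by norm_num))
  have hWopen : ∀ k, IsOpen (W k) := fun k => (hWinv k).1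
  have hWE : ∀ k, E ⊆ W k := fun k => (hWinv k).2.1
  have hWc : ∀ k, (W k)ᶜ.Nonempty := fun k => (hWinv k).2.2.1
  have hWsub : ∀ k, W (k+1) ⊆ W k := by
    intro k
    rw [hWsucc k]
    exact hF3 k (W k) (hWopen k) (hWE k) (hWc k) (hWinv k).2.2.2
  have hWG : ∀ k, W (k+1) ⊆ G k := by
    intro k
    rw [hWsucc k]
    exact hF4 k (W k) (hWopen k) (hWE k) (hWc k) (hWinv k).2.2.2
  have hWvol : ∀ k, volume (W (k+1)) ≤ ENNReal.ofReal ((16:ℝ)⁻¹^(k+1)) := by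
    intro k
    rw [hWsucc k]
    exact hF5 k (W k) (hWopen k) (hWE k) (hWc k) (hWinv k).2.2.2
  have hWstrip : ∀ k, ∀ s : ℝ, 0 < s →
      volume (W (k+1) ∩ {y | infDist y (W k)ᶜ ≤ s}) ≤ ENNReal.ofReal ((16:ℝ)⁻¹^(k+1) * s) := by
    intro k
    rw [hWsucc k]
    exact hF6 k (W k) (hWopen k) (hWE k) (hWc k) (hWinv k).2.2.2
  have hWanti : Antitone W := antitone_nat_of_succ_le hWsub
  have hWvol' : ∀ m, 1 ≤ m → volume (W m) ≤ ENNReal.ofReal ((16:ℝ)⁻¹^m) := by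
    intro m hm
    obtain ⟨k, rfl⟩ := Nat.exists_eq_succ_of_ne_zero (by omega : m ≠ 0)
    exact hWvol k
  clear_value W
  -- the measure
  set S : ℕ → Set ℝ := fun j => W (2*j+2) \ W (2*j+2+1) with hS
  set μ : Measure ℝ := Measure.sum (fun j => (2:ℝ≥0∞)^j • volume.restrict (S j)) with hμ
  have hμapp : ∀ A : Set ℝ, MeasurableSet A →
      μ A = ∑' j, (2:ℝ≥0∞)^j * volume (A ∩ S j) := by
    intro A hA
    rw [hμ, Measure.sum_apply _ hA]
    congr 1
    funext j
    rw [Measure.smul_apply, Measure.restrict_apply hA, smul_eq_mul]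
  have h2pow : ∀ j : ℕ, (2:ℝ≥0∞)^j = ENNReal.ofReal ((2:ℝ)^j) := by
    intro j
    rw [ENNReal.ofReal_pow (by norm_num), ENNReal.ofReal_ofNat]
  haveI hfin : IsFiniteMeasure μ := by
    constructor
    have hb : ∀ j : ℕ, (2:ℝ≥0∞)^j * volume (univ ∩ S j) ≤ (2⁻¹:ℝ≥0∞)^j := by
      intro j
      have h1 : volume (univ ∩ S j) ≤ ENNReal.ofReal ((16:ℝ)⁻¹^(2*j+2)) := by
        rw [univ_inter]
        exact (measure_mono (diff_subset.trans (subset_refl _))).trans (hWvol' (2*j+2) (by omega))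
      calc (2:ℝ≥0∞)^j * volume (univ ∩ S j)
          ≤ (2:ℝ≥0∞)^j * ENNReal.ofReal ((16:ℝ)⁻¹^(2*j+2)) := by gcongr
        _ = ENNReal.ofReal ((2:ℝ)^j * (16:ℝ)⁻¹^(2*j+2)) := by
            rw [h2pow, ← ENNReal.ofReal_mul (by positivity)]
        _ ≤ ENNReal.ofReal ((2⁻¹:ℝ)^j * (2⁻¹:ℝ)^j) := ENNReal.ofReal_le_ofReal (LipAux.keyB j)
        _ ≤ ENNReal.ofReal ((2⁻¹:ℝ)^j * 1) := by
            apply ENNReal.ofReal_le_ofReal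
            have : (2⁻¹:ℝ)^j ≤ 1 := pow_le_one₀ (by norm_num) (by norm_num)
            nlinarith [pow_nonneg (by norm_num : (0:ℝ) ≤ 2⁻¹) j]
        _ = (2⁻¹:ℝ≥0∞)^j := by rw [mul_one, LipAux.ofReal_half_pow]
    calc μ univ ≤ ∑' j, (2⁻¹:ℝ≥0∞)^j := by
          rw [hμapp univ MeasurableSet.univ]
          exact ENNReal.tsum_le_tsum hb
      _ = 2 := LipAux.tsum_half_geo
      _ < ⊤ := by norm_num
  have hatom : ∀ x : ℝ, μ {x} = 0 := by
    intro x
    rw [hμapp _ (measurableSet_singleton x)]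
    have hz : ∀ j : ℕ, (2:ℝ≥0∞)^j * volume ({x} ∩ S j) = 0 := by
      intro j
      rw [measure_mono_null inter_subset_left Real.volume_singleton, mul_zero]
    simp only [hz, tsum_zero]
  -- distance functions
  set dd : ℕ → ℝ → ℝ := fun k x => infDist x (W k)ᶜ with hdd
  have hdpos : ∀ k x, x ∈ W k → 0 < dd k x := by
    intro k x hx
    exact ((hWopen k).isClosed_compl.notMem_iff_infDist_pos (hWc k)).1 (by simpa using hx)
  have hIoo : ∀ k x, Ioo (x - dd k x) (x + dd k x) ⊆ W k := by
    intro k x y hy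
    by_contra hyW
    have h1 : infDist x (W k)ᶜ ≤ dist x y := infDist_le_dist_of_mem hyW
    rw [Real.dist_eq] at h1
    have h2 : |x - y| < dd k x := by
      rw [abs_lt]
      constructor <;> [linarith [hy.2]; linarith [hy.1]]
    simp only [hdd] at h2
    linarith
  have hdbound : ∀ k x, 1 ≤ k → dd k x ≤ (16:ℝ)⁻¹^k := by
    intro k x hk
    rcases le_or_gt (dd k x) 0 with h | h
    · exact h.trans (by positivity)
    · have hv : ENNReal.ofReal (x + dd k x - (x - dd k x)) ≤ volume (W k) := by
        rw [← Real.volume_Ioo]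
        exact measure_mono (hIoo k x)
      rw [show x + dd k x - (x - dd k x) = 2*(dd k x) by ring] at hv
      have h3 := hv.trans (hWvol' k hk)
      have h4 := (ENNReal.ofReal_le_ofReal_iff (by positivity)).1 h3
      linarith
  have hdmono : ∀ k m x, k ≤ m → dd m x ≤ dd k x := by
    intro k m x hkm
    exact infDist_le_infDist_of_subset (compl_subset_compl.2 (hWanti hkm)) (hWc k)
  have hstripIoc : ∀ k (x t : ℝ), 0 < t → dd k x ≤ t →
      volume (W (k+1) ∩ Ioc (x-t) (x+t)) ≤ ENNReal.ofReal ((16:ℝ)⁻¹^(k+1) * (2*t)) := by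
    intro k x t ht hdx
    refine le_trans (measure_mono ?_) (hWstrip k (2*t) (by linarith))
    intro y hy
    refine ⟨hy.1, ?_⟩
    have h1 : infDist y (W k)ᶜ ≤ infDist x (W k)ᶜ + dist y x := infDist_le_infDist_add_dist
    have h2 : dist y x ≤ t := by
      rw [Real.dist_eq, abs_le]
      exact ⟨by linarith [hy.2.1], by linarith [hy.2.2]⟩
    simp only [mem_setOf_eq]
    simp only [hdd] at hdx
    linarith
  -- STEEPNESS
  have hsteep : ∀ x ∈ E, ∀ j : ℕ, ∃ r : ℝ, 0 < r ∧ r ≤ (16:ℝ)⁻¹^(2*j+2) ∧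
      ENNReal.ofReal ((2:ℝ)^j/2) ≤ Mf (LipAux.FF μ) x r := by
    intro x hx j
    set k := 2*j+2 with hk
    set r := dd k x with hr
    have hxW : x ∈ W k := hWE k hx
    have hr0 : 0 < r := hdpos k x hxW
    refine ⟨r, hr0, hdbound k x (by omega), ?_⟩
    have hIooW : Ioo (x-r) (x+r) ⊆ W k := hIoo k x
    have hvol1 : volume (Ioo (x-r) (x+r)) = ENNReal.ofReal (2*r) := by
      rw [Real.volume_Ioo]
      congr 1
      ring
    have hst : volume (W (k+1) ∩ Ioc (x-r) (x+r)) ≤ ENNReal.ofReal (r/2) := by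
      refine (hstripIoc k x r hr0 le_rfl).trans ?_
      apply ENNReal.ofReal_le_ofReal
      have h16 : (16:ℝ)⁻¹^(k+1) ≤ 16⁻¹^1 :=
        pow_le_pow_of_le_one (by norm_num) (by norm_num) (by omega)
      rw [pow_one] at h16
      nlinarith
    have hdiff : ENNReal.ofReal r ≤ volume (Ioo (x-r) (x+r) ∩ S j) := by
      have hsub1 : Ioo (x-r) (x+r) \ (W (k+1) ∩ Ioo (x-r) (x+r)) ⊆ Ioo (x-r) (x+r) ∩ S j := by
        intro y hy
        exact ⟨hy.1, hIooW hy.1, fun h' => hy.2 ⟨h', hy.1⟩⟩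
      have hne : volume (W (k+1) ∩ Ioo (x-r) (x+r)) ≠ ⊤ := by
        refine ne_top_of_le_ne_top ?_ (measure_mono inter_subset_right)
        rw [hvol1]
        exact ENNReal.ofReal_ne_top
      have hmd : volume (Ioo (x-r) (x+r) \ (W (k+1) ∩ Ioo (x-r) (x+r)))
          = volume (Ioo (x-r) (x+r)) - volume (W (k+1) ∩ Ioo (x-r) (x+r)) :=
        measure_diff inter_subset_right
          ((hWopen (k+1)).measurableSet.inter measurableSet_Ioo).nullMeasurableSet hne
      have hWIoo : volume (W (k+1) ∩ Ioo (x-r) (x+r)) ≤ ENNReal.ofReal (r/2) :=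
        le_trans (measure_mono (inter_subset_inter_right _ Ioo_subset_Ioc_self)) hst
      calc ENNReal.ofReal r ≤ ENNReal.ofReal (2*r) - ENNReal.ofReal (r/2) := by
            rw [← ENNReal.ofReal_sub _ (by positivity)]
            apply ENNReal.ofReal_le_ofReal
            linarith
        _ ≤ volume (Ioo (x-r) (x+r)) - volume (W (k+1) ∩ Ioo (x-r) (x+r)) := by
            rw [hvol1]
            exact tsub_le_tsub le_rfl hWIoo
        _ = volume (Ioo (x-r) (x+r) \ (W (k+1) ∩ Ioo (x-r) (x+r))) := hmd.symm
        _ ≤ volume (Ioo (x-r) (x+r) ∩ S j) := measure_mono hsub1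
    have hμIoc : ENNReal.ofReal ((2:ℝ)^j * r) ≤ μ (Ioc (x-r) (x+r)) := by
      rw [hμapp _ measurableSet_Ioc]
      refine le_trans ?_ (ENNReal.le_tsum j)
      calc ENNReal.ofReal ((2:ℝ)^j * r) = (2:ℝ≥0∞)^j * ENNReal.ofReal r := by
            rw [h2pow, ← ENNReal.ofReal_mul (by positivity)]
        _ ≤ (2:ℝ≥0∞)^j * volume (Ioc (x-r) (x+r) ∩ S j) := by
            gcongr
            exact hdiff.trans (measure_mono (inter_subset_inter_left _ Ioo_subset_Ioc_self))
    have hIocsum : μ (Ioc (x-r) x) + μ (Ioc x (x+r)) = μ (Ioc (x-r) (x+r)) := by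
      rw [← measure_union (Ioc_disjoint_Ioc_of_le le_rfl) measurableSet_Ioc,
        Ioc_union_Ioc_eq_Ioc (by linarith) (by linarith)]
    have hside : ENNReal.ofReal ((2:ℝ)^j * r / 2) ≤ μ (Ioc x (x+r)) ∨
        ENNReal.ofReal ((2:ℝ)^j * r / 2) ≤ μ (Ioc (x-r) x) := by
      by_contra hcon
      push_neg at hcon
      have hlt : μ (Ioc (x-r) (x+r)) < ENNReal.ofReal ((2:ℝ)^j * r) := by
        rw [← hIocsum]
        calc μ (Ioc (x-r) x) + μ (Ioc x (x+r))
            < ENNReal.ofReal ((2:ℝ)^j * r / 2) + ENNReal.ofReal ((2:ℝ)^j * r / 2) :=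
              ENNReal.add_lt_add hcon.2 hcon.1
          _ = ENNReal.ofReal ((2:ℝ)^j * r) := by
              rw [← ENNReal.ofReal_add (by positivity) (by positivity)]
              congr 1
              ring
      exact absurd hμIoc (not_le.2 hlt)
    rcases hside with hsd | hsd
    · refine le_trans ?_ (LipAux.le_Mf_FF_right μ hr0)
      apply ENNReal.ofReal_le_ofReal
      have htR : (2:ℝ)^j * r / 2 ≤ (μ (Ioc x (x+r))).toReal := by
        have h5 := ENNReal.toReal_mono (measure_ne_top μ _) hsd
        rwa [ENNReal.toReal_ofReal (by positivity)] at h5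
      rw [div_le_div_iff₀ (by norm_num) hr0] at *
      nlinarith
    · refine le_trans ?_ (LipAux.le_Mf_FF_left μ hr0)
      apply ENNReal.ofReal_le_ofReal
      have htR : (2:ℝ)^j * r / 2 ≤ (μ (Ioc (x-r) x)).toReal := by
        have h5 := ENNReal.toReal_mono (measure_ne_top μ _) hsd
        rwa [ENNReal.toReal_ofReal (by positivity)] at h5
      rw [div_le_div_iff₀ (by norm_num) hr0] at *
      nlinarith
  -- FLATNESS
  have hflat : ∀ x ∈ E, ∀ j : ℕ, ∃ t : ℝ, 0 < t ∧ t ≤ (16:ℝ)⁻¹^(2*j+2+1) ∧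
      Mf (LipAux.FF μ) x t ≤ ENNReal.ofReal (8*(2⁻¹:ℝ)^j) := by
    intro x hx j
    set t := dd (2*j+2+1) x with htdef
    have hxW : x ∈ W (2*j+2+1) := hWE (2*j+2+1) hx
    have ht0 : 0 < t := hdpos (2*j+2+1) x hxW
    refine ⟨t, ht0, hdbound (2*j+2+1) x (by omega), ?_⟩
    have hbnd : ∀ i : ℕ, (2:ℝ≥0∞)^i * volume (Ioc (x-t) (x+t) ∩ S i)
        ≤ ENNReal.ofReal (2*t*(2⁻¹:ℝ)^j) * (2⁻¹:ℝ≥0∞)^i := by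
      intro i
      rcases le_or_gt i j with hij | hij
      · have hz : volume (Ioc (x-t) (x+t) ∩ S i) = 0 := by
          apply measure_mono_null _ (Real.volume_singleton (a := x+t))
          intro y hy
          have hy1 := hy.1
          rcases eq_or_lt_of_le hy1.2 with he | hlt
          · exact he
          · exfalso
            have hyIoo : y ∈ Ioo (x-t) (x+t) := ⟨hy1.1, hlt⟩
            have hyW : y ∈ W (2*i+2+1) :=
              hWanti (by omega : 2*i+2+1 ≤ 2*j+2+1) (hIoo _ x hyIoo)
            exact hy.2.2 hyW
        rw [hz, mul_zero]
        exact zero_le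
      · have hd1 : dd (2*i+1) x ≤ t := hdmono (2*j+2+1) (2*i+1) x (by omega)
        have hst := hstripIoc (2*i+1) x t ht0 hd1
        rw [show 2*i+1+1 = 2*i+2 from by omega] at hst
        have hsub : Ioc (x-t) (x+t) ∩ S i ⊆ W (2*i+2) ∩ Ioc (x-t) (x+t) := by
          intro y hy
          exact ⟨hy.2.1, hy.1⟩
        calc (2:ℝ≥0∞)^i * volume (Ioc (x-t) (x+t) ∩ S i)
            ≤ (2:ℝ≥0∞)^i * ENNReal.ofReal ((16:ℝ)⁻¹^(2*i+2) * (2*t)) := by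
              gcongr
              exact (measure_mono hsub).trans hst
          _ = ENNReal.ofReal ((2*t) * ((2:ℝ)^i * (16:ℝ)⁻¹^(2*i+2))) := by
              rw [h2pow, ← ENNReal.ofReal_mul (by positivity)]
              congr 1
              ring
          _ ≤ ENNReal.ofReal ((2*t) * ((2⁻¹:ℝ)^j * (2⁻¹:ℝ)^i)) := by
              apply ENNReal.ofReal_le_ofReal
              have hk1 := LipAux.keyB i
              have hk2 : (2⁻¹:ℝ)^i ≤ (2⁻¹:ℝ)^j :=
                pow_le_pow_of_le_one (by norm_num) (by norm_num) hij.le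
              have hnn : (0:ℝ) ≤ (2⁻¹:ℝ)^i := by positivity
              have e1 : (2:ℝ)^i * (16:ℝ)⁻¹^(2*i+2) ≤ (2⁻¹:ℝ)^j * (2⁻¹:ℝ)^i :=
                hk1.trans (mul_le_mul_of_nonneg_right hk2 hnn)
              exact mul_le_mul_of_nonneg_left e1 (by positivity)
          _ = ENNReal.ofReal (2*t*(2⁻¹:ℝ)^j) * (2⁻¹:ℝ≥0∞)^i := by
              rw [← LipAux.ofReal_half_pow, ← ENNReal.ofReal_mul (by positivity)]
              congr 1
              ring
    have hμb : μ (Ioc (x-t) (x+t)) ≤ ENNReal.ofReal (4*t*(2⁻¹:ℝ)^j) := by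
      rw [hμapp _ measurableSet_Ioc]
      calc (∑' i, (2:ℝ≥0∞)^i * volume (Ioc (x-t) (x+t) ∩ S i))
          ≤ ∑' i, ENNReal.ofReal (2*t*(2⁻¹:ℝ)^j) * (2⁻¹:ℝ≥0∞)^i := ENNReal.tsum_le_tsum hbnd
        _ = ENNReal.ofReal (2*t*(2⁻¹:ℝ)^j) * 2 := by
            rw [ENNReal.tsum_mul_left, LipAux.tsum_half_geo]
        _ = ENNReal.ofReal (4*t*(2⁻¹:ℝ)^j) := by
            rw [← ENNReal.ofReal_ofNat 2, ← ENNReal.ofReal_mul (by positivity)]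
            congr 1
            ring
    refine (LipAux.Mf_FF_le μ ht0).trans ?_
    apply ENNReal.ofReal_le_ofReal
    have htR : (μ (Ioc (x-t) (x+t))).toReal ≤ 4*t*(2⁻¹:ℝ)^j := by
      have h5 := ENNReal.toReal_mono ENNReal.ofReal_ne_top hμb
      rwa [ENNReal.toReal_ofReal (by positivity)] at h5
    rw [div_le_iff₀ ht0]
    nlinarith [pow_nonneg (by norm_num : (0:ℝ) ≤ 2⁻¹) j]
  -- OFF E
  have hoffE : ∀ x, x ∉ E → ∃ B : ℝ, 0 ≤ B ∧ ∀ r : ℝ, 0 < r → r ≤ 1 →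
      Mf (LipAux.FF μ) x r ≤ ENNReal.ofReal B := by
    intro x hxE
    have hxnW : ∃ N, x ∉ W N := by
      by_contra hall
      push_neg at hall
      exact hxE (hGE ▸ mem_iInter.2 fun n => hWG n (hall (n+1)))
    obtain ⟨N, hN⟩ := hxnW
    refine ⟨4*(4:ℝ)^N, by positivity, ?_⟩
    intro r hr0 hr1
    have hbnd : ∀ i : ℕ, (2:ℝ≥0∞)^i * volume (Ioc (x-r) (x+r) ∩ S i)
        ≤ ENNReal.ofReal (2*r*(4:ℝ)^N) * (2⁻¹:ℝ≥0∞)^i := by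
      intro i
      rcases le_or_gt N (2*i+1) with hiN | hiN
      · have hxn : x ∉ W (2*i+1) := fun hmem => hN (hWanti hiN hmem)
        have hd0 : dd (2*i+1) x = 0 := infDist_zero_of_mem (by simpa using hxn)
        have hst := hstripIoc (2*i+1) x r hr0 (by rw [hd0]; exact hr0.le)
        rw [show 2*i+1+1 = 2*i+2 from by omega] at hst
        have hsub : Ioc (x-r) (x+r) ∩ S i ⊆ W (2*i+2) ∩ Ioc (x-r) (x+r) := by
          intro y hy
          exact ⟨hy.2.1, hy.1⟩
        calc (2:ℝ≥0∞)^i * volume (Ioc (x-r) (x+r) ∩ S i)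
            ≤ (2:ℝ≥0∞)^i * ENNReal.ofReal ((16:ℝ)⁻¹^(2*i+2) * (2*r)) := by
              gcongr
              exact (measure_mono hsub).trans hst
          _ = ENNReal.ofReal ((2*r) * ((2:ℝ)^i * (16:ℝ)⁻¹^(2*i+2))) := by
              rw [h2pow, ← ENNReal.ofReal_mul (by positivity)]
              congr 1
              ring
          _ ≤ ENNReal.ofReal ((2*r*(4:ℝ)^N) * (2⁻¹:ℝ)^i) := by
              apply ENNReal.ofReal_le_ofReal
              have hk1 := LipAux.keyB i
              have hk2 : (2⁻¹:ℝ)^i ≤ 1 := pow_le_one₀ (by norm_num) (by norm_num)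
              have hk3 : (1:ℝ) ≤ (4:ℝ)^N := one_le_pow₀ (by norm_num : (1:ℝ) ≤ 4)
              have hnn : (0:ℝ) ≤ (2⁻¹:ℝ)^i := by positivity
              have e1 : (2:ℝ)^i * (16:ℝ)⁻¹^(2*i+2) ≤ (2⁻¹:ℝ)^i := by nlinarith
              have e2 : (2*r) * ((2:ℝ)^i * (16:ℝ)⁻¹^(2*i+2)) ≤ (2*r) * (2⁻¹:ℝ)^i :=
                mul_le_mul_of_nonneg_left e1 (by positivity)
              have e3 : (2*r) * (2⁻¹:ℝ)^i ≤ (2*r*(4:ℝ)^N) * (2⁻¹:ℝ)^i := by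
                apply mul_le_mul_of_nonneg_right _ hnn
                nlinarith [hr0.le]
              linarith
          _ = ENNReal.ofReal (2*r*(4:ℝ)^N) * (2⁻¹:ℝ≥0∞)^i := by
              rw [← LipAux.ofReal_half_pow, ← ENNReal.ofReal_mul (by positivity)]
      · have hvol2 : volume (Ioc (x-r) (x+r) ∩ S i) ≤ ENNReal.ofReal (2*r) := by
          refine (measure_mono inter_subset_left).trans ?_
          rw [Real.volume_Ioc]
          exact ENNReal.ofReal_le_ofReal (by linarith)
        calc (2:ℝ≥0∞)^i * volume (Ioc (x-r) (x+r) ∩ S i)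
            ≤ (2:ℝ≥0∞)^i * ENNReal.ofReal (2*r) := by gcongr
          _ = ENNReal.ofReal ((2*r) * (2:ℝ)^i) := by
              rw [h2pow, ← ENNReal.ofReal_mul (by positivity)]
              congr 1
              ring
          _ ≤ ENNReal.ofReal ((2*r*(4:ℝ)^N) * (2⁻¹:ℝ)^i) := by
              apply ENNReal.ofReal_le_ofReal
              have hiN' : i ≤ N := by omega
              have hk1 : (2:ℝ)^i * (2:ℝ)^i ≤ (4:ℝ)^N := by
                have h41 : (4:ℝ)^i ≤ (4:ℝ)^N := pow_le_pow_right₀ (by norm_num) hiN'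
                have h42 : (2:ℝ)^i * (2:ℝ)^i = (4:ℝ)^i := by
                  rw [← mul_pow]
                  norm_num
                linarith
              have hk2 : (0:ℝ) < (2:ℝ)^i := by positivity
              have hk3 : (2⁻¹:ℝ)^i = ((2:ℝ)^i)⁻¹ := by
                rw [← inv_pow]
              rw [hk3]
              have hmain : (2*r)*(2:ℝ)^i*(2:ℝ)^i ≤ 2*r*(4:ℝ)^N := by
                nlinarith [hr0.le]
              calc (2*r)*(2:ℝ)^i = ((2*r)*(2:ℝ)^i*(2:ℝ)^i) * ((2:ℝ)^i)⁻¹ := by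
                    field_simp
                _ ≤ (2*r*(4:ℝ)^N) * ((2:ℝ)^i)⁻¹ := by gcongr
          _ = ENNReal.ofReal (2*r*(4:ℝ)^N) * (2⁻¹:ℝ≥0∞)^i := by
              rw [← LipAux.ofReal_half_pow, ← ENNReal.ofReal_mul (by positivity)]
    have hμb : μ (Ioc (x-r) (x+r)) ≤ ENNReal.ofReal (4*r*(4:ℝ)^N) := by
      rw [hμapp _ measurableSet_Ioc]
      calc (∑' i, (2:ℝ≥0∞)^i * volume (Ioc (x-r) (x+r) ∩ S i))
          ≤ ∑' i, ENNReal.ofReal (2*r*(4:ℝ)^N) * (2⁻¹:ℝ≥0∞)^i := ENNReal.tsum_le_tsum hbnd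
        _ = ENNReal.ofReal (2*r*(4:ℝ)^N) * 2 := by
            rw [ENNReal.tsum_mul_left, LipAux.tsum_half_geo]
        _ = ENNReal.ofReal (4*r*(4:ℝ)^N) := by
            rw [← ENNReal.ofReal_ofNat 2, ← ENNReal.ofReal_mul (by positivity)]
            congr 1
            ring
    refine (LipAux.Mf_FF_le μ hr0).trans ?_
    apply ENNReal.ofReal_le_ofReal
    have htR : (μ (Ioc (x-r) (x+r))).toReal ≤ 4*r*(4:ℝ)^N := by
      have h5 := ENNReal.toReal_mono ENNReal.ofReal_ne_top hμb
      rwa [ENNReal.toReal_ofReal (by positivity)] at h5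
    rw [div_le_iff₀ hr0]
    nlinarith [pow_nonneg (by norm_num : (0:ℝ) ≤ 4) N]
  -- frequently small scales
  have hfreq : ∀ (P : ℝ → Prop), (∀ δ : ℝ, 0 < δ → ∃ r, 0 < r ∧ r < δ ∧ P r) →
      ∃ᶠ r in 𝓝[>](0:ℝ), P r := by
    intro P h
    rw [Filter.frequently_iff]
    intro V hV
    rw [mem_nhdsGT_iff_exists_Ioo_subset] at hV
    obtain ⟨u, hu, hsub⟩ := hV
    obtain ⟨r, h1, h2, h3⟩ := h u hu
    exact ⟨r, hsub ⟨h1, h2⟩, h3⟩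
  -- bigLip = ⊤ on E
  have hbigE : ∀ x ∈ E, bigLip (LipAux.FF μ) x = ⊤ := by
    intro x hx
    unfold bigLip
    rw [Filter.limsup_eq, eq_top_iff]
    apply le_sInf
    intro b hb
    rw [top_le_iff]
    by_contra hbtop
    obtain ⟨n, hn⟩ := ENNReal.exists_nat_gt hbtop
    have hfr : ∃ᶠ r in 𝓝[>](0:ℝ), ENNReal.ofReal ((2:ℝ)^n) ≤ Mf (LipAux.FF μ) x r := by
      apply hfreq
      intro δ hδ
      obtain ⟨m, hm⟩ := exists_pow_lt_of_lt_one hδ (show (16:ℝ)⁻¹ < 1 by norm_num)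
      obtain ⟨r, h1, h2, h3⟩ := hsteep x hx (max (n+1) m)
      refine ⟨r, h1, ?_, ?_⟩
      · refine lt_of_le_of_lt (h2.trans ?_) hm
        exact pow_le_pow_of_le_one (by norm_num) (by norm_num) (by
          have := le_max_right (n+1) m
          omega)
      · refine le_trans (ENNReal.ofReal_le_ofReal ?_) h3
        have h4 : (2:ℝ)^(n+1) ≤ (2:ℝ)^(max (n+1) m) :=
          pow_le_pow_right₀ (by norm_num) (le_max_left _ _)
        rw [pow_succ] at h4
        linarith
    obtain ⟨r, hr1, hr2⟩ := (hfr.and_eventually hb).exists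
    have hchain : (n:ℝ≥0∞) ≤ ENNReal.ofReal ((2:ℝ)^n) := by
      rw [← ENNReal.ofReal_natCast n]
      apply ENNReal.ofReal_le_ofReal
      calc (n:ℝ) ≤ ((2^n : ℕ):ℝ) := by exact_mod_cast (Nat.lt_two_pow_self (n := n)).le
        _ = (2:ℝ)^n := by push_cast; ring
    exact absurd ((hchain.trans hr1).trans hr2) (not_le.2 hn)
  -- litLip = 0 on E
  have hlitE : ∀ x ∈ E, litLip (LipAux.FF μ) x = 0 := by
    intro x hx
    have hupper : ∀ j : ℕ, litLip (LipAux.FF μ) x ≤ ENNReal.ofReal (8*(2⁻¹:ℝ)^j) := by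
      intro j
      unfold litLip
      rw [Filter.liminf_eq]
      apply sSup_le
      intro b hb
      have hfr : ∃ᶠ r in 𝓝[>](0:ℝ),
          Mf (LipAux.FF μ) x r ≤ ENNReal.ofReal (8*(2⁻¹:ℝ)^j) := by
        apply hfreq
        intro δ hδ
        obtain ⟨m, hm⟩ := exists_pow_lt_of_lt_one hδ (show (16:ℝ)⁻¹ < 1 by norm_num)
        obtain ⟨t, h1, h2, h3⟩ := hflat x hx (max j m)
        refine ⟨t, h1, ?_, ?_⟩
        · refine lt_of_le_of_lt (h2.trans ?_) hm
          exact pow_le_pow_of_le_one (by norm_num) (by norm_num) (by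
            have := le_max_right j m
            omega)
        · refine h3.trans (ENNReal.ofReal_le_ofReal ?_)
          have h4 : (2⁻¹:ℝ)^(max j m) ≤ (2⁻¹:ℝ)^j :=
            pow_le_pow_of_le_one (by norm_num) (by norm_num) (le_max_left _ _)
          linarith
      obtain ⟨r, hr1, hr2⟩ := (hfr.and_eventually hb).exists
      exact hr2.trans hr1
    have htend : Tendsto (fun j : ℕ => ENNReal.ofReal (8*(2⁻¹:ℝ)^j)) atTop (𝓝 0) := by
      have h0 : Tendsto (fun j : ℕ => 8*(2⁻¹:ℝ)^j) atTop (𝓝 (8*0)) :=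
        (tendsto_pow_atTop_nhds_zero_of_lt_one (by norm_num) (by norm_num)).const_mul 8
      rw [mul_zero] at h0
      have := ENNReal.tendsto_ofReal h0
      simpa using this
    exact le_antisymm (ge_of_tendsto' htend hupper) (zero_le)
  -- off E
  have hbigoff : ∀ x, x ∉ E → bigLip (LipAux.FF μ) x ≠ ⊤ := by
    intro x hx
    obtain ⟨B, hB0, hB⟩ := hoffE x hx
    have hev : ∀ᶠ r in 𝓝[>](0:ℝ), Mf (LipAux.FF μ) x r ≤ ENNReal.ofReal B := by
      have hmem : Ioo (0:ℝ) 1 ∈ 𝓝[>](0:ℝ) := by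
        rw [mem_nhdsGT_iff_exists_Ioo_subset]
        exact ⟨1, by norm_num, subset_rfl⟩
      exact eventually_of_mem hmem (fun r hr => hB r hr.1 hr.2.le)
    have hle : bigLip (LipAux.FF μ) x ≤ ENNReal.ofReal B := by
      unfold bigLip
      rw [Filter.limsup_eq]
      exact sInf_le hev
    intro htop
    rw [htop, top_le_iff] at hle
    exact ENNReal.ofReal_ne_top hle
  have hll : ∀ x, litLip (LipAux.FF μ) x ≤ bigLip (LipAux.FF μ) x := by
    intro x
    unfold litLip bigLip
    rw [Filter.liminf_eq, Filter.limsup_eq]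
    apply sSup_le
    intro b hb
    apply le_sInf
    intro c hc
    have hb' : ∀ᶠ n in 𝓝[>](0:ℝ), b ≤ Mf (LipAux.FF μ) x n := hb
    have hc' : ∀ᶠ n in 𝓝[>](0:ℝ), Mf (LipAux.FF μ) x n ≤ c := hc
    obtain ⟨r, h1, h2⟩ := (hb'.and hc').exists
    exact h1.trans h2
  refine ⟨LipAux.FF μ, LipAux.FF_cont μ hatom, LipAux.FF_mono μ, ?_, ?_, fun x hx => hlitE x hx⟩
  · ext x
    simp only [mem_setOf_eq]
    constructor
    · intro h
      by_contra hxE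
      exact hbigoff x hxE h
    · exact hbigE x
  · intro x
    by_cases hx : x ∈ E
    · rw [hlitE x hx]
      exact ENNReal.zero_ne_top
    · intro h
      exact hbigoff x hx (top_unique (h ▸ hll x))
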